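/- Let q ≥ 2, k ≥ 1, n > 2k, let x ∈ Irr(n) be irreducible, and suppose x'' is obtained from x by a sequence of exact k-TDs followed by one substitution adding a ∈ Σ_q∖{0} at a position p inside the copy of the last duplication, where p satisfies |x''| − k < p ≤ |x''| (the substitution lies in the last k positions of x''). Set μ = μ(φ̄(x)) and μ'' = μ(φ̄(x'')). Then exactly one of the following holds: (i) |μ''| = |μ| and μ'' is obtained from μ by replacing a single symbol 0 by a nonzero symbol; or (ii) |μ''| = |μ| + k and μ'' is obtained from μ by inserting a block of k consecutive symbols of the form 0^{j−1} a 0^{k−j} for some j ∈ {1,…,k} and a ∈ Σ_q∖{0} (a block of Hamming weight 1). -/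

import Mathlib

open List

namespace NoisyDup

variable {q : ℕ}

/-- Tandem duplication `T_{i,k}`: duplicates the length-`k` substring starting
after position `i` (0-based index `i`), if it exists. -/
def dup (i k : ℕ) (x : List (ZMod q)) : List (ZMod q) :=
  if i + k ≤ x.length then x.take i ++ (x.drop i).take k ++ x.drop i else x

/-- Add `a` (mod `q`) to the entry at 0-based index `i`. -/
def addAt (x : List (ZMod q)) (i : ℕ) (a : ZMod q) : List (ZMod q) :=
  x.set i (x.getD i 0 + a)

/-- One exact tandem duplication of length `k`. -/
def ExactStep (k : ℕ) (x y : List (ZMod q)) : Prop :=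
  ∃ i, i + k ≤ x.length ∧ y = dup i k x

/-- One noisy duplication of length `k`: an exact duplication followed by adding
some `a ≠ 0` to one symbol of the inserted copy (positions are 1-indexed). -/
def NoisyStep (k : ℕ) (x y : List (ZMod q)) : Prop :=
  ∃ (i : ℕ) (a : ZMod q) (j : ℕ), i + k ≤ x.length ∧ a ≠ 0 ∧
    i + k + 1 ≤ j ∧ j ≤ i + 2 * k ∧ y = addAt (dup i k x) (j - 1) a

/-- Descendants by exact duplications only: `D_k^{*(0)}`. -/
def ExactDesc (k : ℕ) (x y : List (ZMod q)) : Prop :=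
  Relation.ReflTransGen (ExactStep k) x y

/-- The descendant cone `D_k^{*(≤1)}`: any number of exact duplications and at
most one noisy duplication. -/
def descCone (k : ℕ) (x : List (ZMod q)) : Set (List (ZMod q)) :=
  {y | ExactDesc k x y ∨ ∃ u v, ExactDesc k x u ∧ NoisyStep k u v ∧ ExactDesc k v y}

/-- `φ̂(x)`: the first `k` symbols. -/
def hatPhi (k : ℕ) (x : List (ZMod q)) : List (ZMod q) := x.take k

/-- `φ̄(x)_i = x_{i+k} - x_i` (1-indexed), a string of length `|x| - k`. -/
def barPhi (k : ℕ) (x : List (ZMod q)) : List (ZMod q) :=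
  (List.range (x.length - k)).map fun i => x.getD (i + k) 0 - x.getD i 0

/-- Auxiliary for `mu`: `cnt` counts the current run of zeros. -/
def muAux (k : ℕ) : ℕ → List (ZMod q) → List (ZMod q)
  | cnt, [] => List.replicate (cnt % k) 0
  | cnt, a :: t =>
      if a = 0 then muAux k (cnt + 1) t
      else List.replicate (cnt % k) 0 ++ a :: muAux k 0 t

/-- `μ(z)`: reduce the length of every maximal run of zeros modulo `k`. -/
def mu (k : ℕ) (z : List (ZMod q)) : List (ZMod q) := muAux k 0 z

/-- `x` contains a tandem repeat of length `k`. -/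
def HasRepeat (k : ℕ) (x : List (ZMod q)) : Prop :=
  ∃ i, i + 2 * k ≤ x.length ∧ (x.drop i).take k = (x.drop (i + k)).take k

/-- `x` is irreducible: it contains no tandem repeat of length `k`. -/
def IsIrreducible (k : ℕ) (x : List (ZMod q)) : Prop := ¬ HasRepeat k x

/-- The duplication root: the (unique) irreducible ancestor of `x` under exact
duplications of length `k`. -/
noncomputable def rt (k : ℕ) (x : List (ZMod q)) : List (ZMod q) :=
  haveI := Classical.propDecidable (∃ z, IsIrreducible k z ∧ ExactDesc k z x)
  if h : ∃ z, IsIrreducible k z ∧ ExactDesc k z x then h.choose else x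

/-- The set of irreducible strings of length `n` over `Σ_q`. -/
def Irr (k n : ℕ) : Set (List (ZMod q)) := {x | x.length = n ∧ IsIrreducible k x}

/-- `ins_k(u, j)`: the subsequence of entries in (1-indexed) positions congruent
to `j` modulo `k`. -/
def splitk (k j : ℕ) (u : List (ZMod q)) : List (ZMod q) :=
  (((List.range u.length).zip u).filter fun p => p.1 % k == j - 1).map Prod.snd

/-- The interleaving `inl(u) = ins_k(u,1) ⋯ ins_k(u,k)`. -/
def inl (k : ℕ) (u : List (ZMod q)) : List (ZMod q) :=
  ((List.range k).map fun j => splitk k (j + 1) u).flatten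

/-- The indicator `Γ(z)` of the nonzero entries of `z`. -/
def gamma (z : List (ZMod q)) : List Bool := z.map fun a => decide (a ≠ 0)

/-- The cumulative-sum map (mod `q`). -/
def cusum (z : List (ZMod q)) : List (ZMod q) :=
  (List.range z.length).map fun i => (z.take (i + 1)).sum

/-- Hamming weight of a binary string. -/
def wt (u : List Bool) : ℕ := u.count true

/-- The VT syndrome `Σ i·u_i` (1-indexed). -/
def vtSum (u : List Bool) : ℕ := (((List.range u.length).zip u).map fun p => if p.2 then p.1 + 1 else 0).sum

/-- The (variable-length) Varshamov–Tenengolts code. -/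
def CVT (α m : ℕ) : Set (List Bool) := {z | z.length ≤ m - 1 ∧ vtSum z % m = α}

/-- `Σ_{i=1}^{|u|} i · (u_1 + ⋯ + u_i)`. -/
def wSum (u : List Bool) : ℕ :=
  ((List.range u.length).map fun i => (i + 1) * wt (u.take (i + 1))).sum

/-- Tenengolts' binary map `ζ`. -/
def zeta (z : List (ZMod q)) : List Bool :=
  ((List.range z.length).zip z).map fun p => if p.1 = 0 then true else decide ((z.getD (p.1 - 1) 0).val ≤ p.2.val)

/-- `Σ_{i=1}^{|z|} (i-1)·ζ(z)_i`. -/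
def tqSum (z : List (ZMod q)) : ℕ := (((List.range (zeta z).length).zip (zeta z)).map fun p => if p.2 then p.1 else 0).sum

/-- Tenengolts' (variable-length) `q`-ary single-indel-correcting code. -/
def CTq (α β m : ℕ) : Set (List (ZMod q)) :=
  {z | z.length ≤ m ∧ (z.map ZMod.val).sum % q = α ∧ tqSum z % m = β}

/-- The length of `s_j = Γ(ins_k(μ,j))` for a codeword of length `n`
(the number of positions in `{1,…,n-k}` congruent to `j` mod `k`). -/
def sLen (k n j : ℕ) : ℕ := (List.range (n - k)).countP fun i => i % k == j - 1

/-- Admissibility of the parameters of the code `C_nd`. -/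
def Admissible (q k n : ℕ) (a c : ℕ → ℕ) (b a1 a2 a3 a4 b1 b2 b3 b4 : ℕ) : Prop :=
  (∀ j ∈ Finset.Icc 1 k, a j ≤ 2 * (sLen k n j + 1)) ∧
  (∀ j ∈ Finset.Icc 1 k, c j ≤ 2 * sLen k n j) ∧
  b ≤ 4 ∧ a1 ≤ q - 1 ∧ a2 ≤ q - 1 ∧ a3 ≤ q - 1 ∧ a4 ≤ q - 1 ∧
  b1 ≤ (n - k) / 2 ∧ b2 ≤ (n - k) / 2 ∧ b3 ≤ n - k - 1 ∧ b4 ≤ n - k - 1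

/-- The code `C_nd` for the noisy duplication channel. -/
def Cnd (k n : ℕ) (a c : ℕ → ℕ) (b a1 a2 a3 a4 b1 b2 b3 b4 : ℕ) : Set (List (ZMod q)) :=
  {x | x.length = n ∧ IsIrreducible k x ∧
    (∀ j ∈ Finset.Icc 1 k,
        gamma (splitk k j (mu k (barPhi k x))) ∈
          CVT (a j) (2 * (gamma (splitk k j (mu k (barPhi k x)))).length + 3)) ∧
    (∀ j ∈ Finset.Icc 1 k,
        wSum (gamma (splitk k j (mu k (barPhi k x)))) %
          (2 * (gamma (splitk k j (mu k (barPhi k x)))).length + 1) = c j) ∧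
    ((Finset.Icc 1 k).sum fun j => wt (gamma (splitk k j (mu k (barPhi k x))))) % 5 = b ∧
    splitk 2 1 (inl k (mu k (barPhi k x))) ∈ CTq a1 b1 ((n - k + 1) / 2) ∧
    splitk 2 2 (inl k (mu k (barPhi k x))) ∈ CTq a2 b2 ((n - k + 1) / 2) ∧
    cusum (inl k (mu k (barPhi k x))) ∈ CTq a3 b3 (n - k) ∧
    inl k (mu k (barPhi k x)) ∈ CTq a4 b4 (n - k)}

/-- `w` is obtained from `u` by deleting one occurrence of the symbol `b`. -/
def delSymb (u w : List (ZMod q)) (b : ZMod q) : Prop :=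
  ∃ i, i < u.length ∧ u.getD i 0 = b ∧ w = u.eraseIdx i

/-- `w` is obtained from `u` by inserting the symbol `b` at some position. -/
def insOne (u w : List (ZMod q)) (b : ZMod q) : Prop :=
  ∃ i, i ≤ u.length ∧ w = u.take i ++ b :: u.drop i

/-- `w` is obtained from `u` by inserting the adjacent pair `b, c`. -/
def insPair (u w : List (ZMod q)) (b c : ZMod q) : Prop :=
  ∃ i, i ≤ u.length ∧ w = u.take i ++ b :: c :: u.drop i

/-- `w` is obtained from `u` by inserting two `0`s separated by exactly one
(unchanged) symbol of `u`. -/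
def insSpread0 (u w : List (ZMod q)) : Prop :=
  ∃ i, i < u.length ∧ w = u.take i ++ 0 :: u.getD i 0 :: 0 :: u.drop (i + 1)

/-- `w` is obtained from `u` by inserting a nonzero `a` and replacing the
symbol `c` immediately following the insertion point by `c - a`. -/
def insSub (u w : List (ZMod q)) : Prop :=
  ∃ a : ZMod q, a ≠ 0 ∧ ∃ i, i < u.length ∧
    w = u.take i ++ a :: (u.getD i 0 - a) :: u.drop (i + 1)

/-- `w` is obtained from `u` by replacing a single symbol `0` by a nonzero symbol. -/
def subOne (u w : List (ZMod q)) : Prop :=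
  ∃ i, i < u.length ∧ u.getD i 0 = 0 ∧ ∃ a : ZMod q, a ≠ 0 ∧ w = u.set i a

/-- `w` is obtained from `u` by replacing two adjacent symbols `0, c` by
`a, c - a` for some nonzero `a`. -/
def subTwo (u w : List (ZMod q)) : Prop :=
  ∃ i, i + 1 < u.length ∧ u.getD i 0 = 0 ∧ ∃ a : ZMod q, a ≠ 0 ∧
    w = u.take i ++ a :: (u.getD (i + 1) 0 - a) :: u.drop (i + 2)

/-- `w` is obtained from `u` by swapping an adjacent pair `b, 0` (with `b ≠ 0`)
into `0, b`. -/
def swapPair (u w : List (ZMod q)) : Prop :=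
  ∃ i, i + 1 < u.length ∧ u.getD i 0 ≠ 0 ∧ u.getD (i + 1) 0 = 0 ∧
    w = u.take i ++ 0 :: u.getD i 0 :: u.drop (i + 2)

/-- `w` is obtained from `u` by deleting a single symbol. -/
def delQ (u w : List (ZMod q)) : Prop := ∃ i, i < u.length ∧ w = u.eraseIdx i

/-- `w` is obtained from `u` by inserting a single symbol. -/
def insQ (u w : List (ZMod q)) : Prop :=
  ∃ (i : ℕ) (b : ZMod q), i ≤ u.length ∧ w = u.take i ++ b :: u.drop i


section StatementElevenAux
variable {q : ℕ}

lemma getD_replicate_zero (n m : ℕ) : (List.replicate n (0 : ZMod q)).getD m 0 = 0 := by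
  rw [List.getD_eq_getElem?_getD, List.getElem?_replicate]
  split <;> rfl

@[simp] lemma muAux_nil (k c : ℕ) : muAux (q := q) k c [] = List.replicate (c % k) 0 := rfl

lemma muAux_cons_zero (k c : ℕ) (t : List (ZMod q)) :
    muAux k c (0 :: t) = muAux k (c + 1) t := by
  simp [muAux]

lemma muAux_cons_ne (k c : ℕ) (b : ZMod q) (t : List (ZMod q)) (hb : b ≠ 0) :
    muAux k c (b :: t) = List.replicate (c % k) 0 ++ b :: muAux k 0 t := by
  simp [muAux, hb]

lemma muAux_replicate_append (k s c : ℕ) (v : List (ZMod q)) :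
    muAux k c (List.replicate s 0 ++ v) = muAux k (c + s) v := by
  induction s generalizing c with
  | zero => simp
  | succ s ih =>
      rw [List.replicate_succ, List.cons_append, muAux_cons_zero, ih]
      ring_nf

lemma muAux_add_k (k : ℕ) (v : List (ZMod q)) : ∀ c, muAux k (c + k) v = muAux k c v := by
  induction v with
  | nil => intro c; simp [Nat.add_mod_right]
  | cons b t ih =>
      intro c
      by_cases hb : b = 0
      · subst hb
        rw [muAux_cons_zero, muAux_cons_zero, show c + k + 1 = c + 1 + k by ring, ih]
      · rw [muAux_cons_ne _ _ _ _ hb, muAux_cons_ne _ _ _ _ hb, Nat.add_mod_right]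

lemma set_replicate_append (a : ZMod q) :
    ∀ (m n : ℕ) (S : List (ZMod q)), m < n →
    (List.replicate n (0 : ZMod q) ++ S).set m a =
      List.replicate m 0 ++ a :: (List.replicate (n - m - 1) 0 ++ S) := by
  intro m
  induction m with
  | zero =>
      intro n S hn
      obtain ⟨n', rfl⟩ : ∃ n', n = n' + 1 := ⟨n - 1, by omega⟩
      simp [List.replicate_succ]
  | succ m ih =>
      intro n S hn
      obtain ⟨n', rfl⟩ : ∃ n', n = n' + 1 := ⟨n - 1, by omega⟩
      rw [List.replicate_succ, List.cons_append, List.set_cons_succ, ih n' S (by omega)]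
      simp [List.replicate_succ]

lemma set_replicate' (a : ZMod q) (m n : ℕ) (h : m < n) :
    (List.replicate n (0 : ZMod q)).set m a =
      List.replicate m 0 ++ a :: List.replicate (n - m - 1) 0 := by
  have h2 := set_replicate_append (q := q) a m n [] h
  simpa using h2

/-- The relation describing how the `μ`-root can change under a tail substitution. -/
def MuRel (k : ℕ) (w w' : List (ZMod q)) : Prop :=
  (w'.length = w.length ∧ subOne w w') ∨
  (w'.length = w.length + k ∧ ∃ pos ≤ w.length, ∃ j ∈ Finset.Icc 1 k, ∃ b : ZMod q, b ≠ 0 ∧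
    w' = w.take pos ++ (List.replicate (j - 1) 0 ++ b :: List.replicate (k - j) 0) ++ w.drop pos)

lemma set_append_right' (p u : List (ZMod q)) (i : ℕ) (a : ZMod q) :
    (p ++ u).set (p.length + i) a = p ++ u.set i a := by
  rw [List.set_append]
  simp

lemma MuRel_prepend {k : ℕ} {w w' : List (ZMod q)} (p : List (ZMod q))
    (h : MuRel k w w') : MuRel k (p ++ w) (p ++ w') := by
  rcases h with ⟨hlen, i, hi, hz, a, ha, hw'⟩ | ⟨hlen, pos, hpos, j, hj, b, hb, hw'⟩
  · left
    refine ⟨by simp [hlen], p.length + i, by simp; omega, ?_, a, ha, ?_⟩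
    · rw [List.getD_append_right _ _ _ _ (by omega)]
      simpa using hz
    · rw [hw', set_append_right']
  · right
    refine ⟨by simp [hlen]; ring, p.length + pos, by simp; omega, j, hj, b, hb, ?_⟩
    rw [hw', List.take_append, List.drop_append]
    simp [List.append_assoc, List.take_of_length_le (Nat.le_add_right p.length pos),
      List.drop_eq_nil_of_le (Nat.le_add_right p.length pos)]

lemma modk_cases {k m1 d c : ℕ} (hk : 0 < k) (hm1 : m1 < k)
    (h : (m1 + 1 + d) % k = c % k) :
    m1 + 1 + d % k = c % k ∨ m1 + 1 + d % k = c % k + k := by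
  have h1 : (m1 + 1 + d % k) % k = c % k := by
    rw [Nat.add_mod_mod]; exact h
  have hd : d % k < k := Nat.mod_lt _ hk
  have hc : c % k < k := Nat.mod_lt _ hk
  rcases Nat.lt_or_ge (m1 + 1 + d % k) k with hs | hs
  · left; rw [← h1, Nat.mod_eq_of_lt hs]
  · right
    have h2 : m1 + 1 + d % k = (m1 + 1 + d % k - k) + k := by omega
    rw [h2, Nat.add_mod_right, Nat.mod_eq_of_lt (by omega)] at h1
    omega

lemma muRel_core {k : ℕ} (hk : 0 < k) (a : ZMod q) (ha : a ≠ 0) :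
    ∀ (v : List (ZMod q)) (c m1 d : ℕ), m1 < k → (m1 + 1 + d) % k = c % k →
    MuRel k (muAux k c v) (List.replicate m1 0 ++ a :: muAux k d v) := by
  intro v
  induction v with
  | nil =>
      intro c m1 d hm1 hmod
      rw [muAux_nil, muAux_nil]
      rcases modk_cases hk hm1 hmod with hcase | hcase
      · have hm1c : m1 < c % k := by omega
        have hw' : List.replicate m1 (0 : ZMod q) ++ a :: List.replicate (d % k) 0 =
            (List.replicate (c % k) (0 : ZMod q)).set m1 a := by
          rw [set_replicate' a _ _ hm1c, show c % k - m1 - 1 = d % k by omega]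
        left
        rw [hw']
        exact ⟨by simp, m1, by simpa using hm1c, getD_replicate_zero _ _, a, ha, rfl⟩
      · right
        refine ⟨by simp; omega, 0, by simp, m1 + 1, by simp; omega, a, ha, ?_⟩
        simp only [List.take_zero, List.drop_zero, List.nil_append, Nat.add_sub_cancel,
          List.append_assoc, List.cons_append]
        rw [← List.replicate_add, show k - (m1 + 1) + c % k = d % k by omega]
  | cons b t ih =>
      intro c m1 d hm1 hmod
      by_cases hb : b = 0
      · subst hb
        rw [muAux_cons_zero, muAux_cons_zero]
        exact ih (c + 1) m1 (d + 1) hm1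
          (by rw [show m1 + 1 + (d + 1) = (m1 + 1 + d) + 1 from rfl, Nat.add_mod,
                hmod, ← Nat.add_mod])
      · rw [muAux_cons_ne _ _ _ _ hb, muAux_cons_ne _ _ _ _ hb]
        rcases modk_cases hk hm1 hmod with hcase | hcase
        · have hm1c : m1 < c % k := by omega
          have hw' : List.replicate m1 (0 : ZMod q) ++
                a :: (List.replicate (d % k) 0 ++ b :: muAux k 0 t) =
              (List.replicate (c % k) (0 : ZMod q) ++ b :: muAux k 0 t).set m1 a := by
            rw [set_replicate_append a _ _ _ hm1c, show c % k - m1 - 1 = d % k by omega]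
          left
          rw [hw']
          refine ⟨by simp, m1, by simp; omega, ?_, a, ha, rfl⟩
          rw [List.getD_append _ _ _ _ (by simp; omega)]
          exact getD_replicate_zero _ _
        · right
          refine ⟨by simp; omega, 0, by simp, m1 + 1, by simp; omega, a, ha, ?_⟩
          simp only [List.take_zero, List.drop_zero, List.nil_append, Nat.add_sub_cancel,
            List.append_assoc, List.cons_append]
          rw [← List.append_assoc (List.replicate (k - (m1 + 1)) (0 : ZMod q)),
            ← List.replicate_add, show k - (m1 + 1) + c % k = d % k by omega]

lemma muRel_insert {k : ℕ} (hk : 0 < k) (a : ZMod q) (ha : a ≠ 0) (j : ℕ)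
    (hj1 : 1 ≤ j) (hj2 : j ≤ k) (v : List (ZMod q)) :
    ∀ (u : List (ZMod q)) (c : ℕ),
      MuRel k (muAux k c (u ++ v))
        (muAux k c (u ++ (List.replicate (j - 1) 0 ++ a :: List.replicate (k - j) 0) ++ v)) := by
  intro u
  induction u with
  | nil =>
      intro c
      simp only [List.nil_append]
      rw [List.append_assoc, List.cons_append, muAux_replicate_append,
        muAux_cons_ne _ _ _ _ ha, muAux_replicate_append]
      refine muRel_core hk a ha v c ((c + (j - 1)) % k) (0 + (k - j)) (Nat.mod_lt _ hk) ?_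
      rw [Nat.add_assoc, Nat.mod_add_mod,
        show c + (j - 1) + (1 + (0 + (k - j))) = c + k by omega, Nat.add_mod_right]
  | cons b t ih =>
      intro c
      by_cases hb : b = 0
      · subst hb
        simp only [List.cons_append]
        rw [muAux_cons_zero, muAux_cons_zero]
        exact ih (c + 1)
      · simp only [List.cons_append]
        rw [muAux_cons_ne _ _ _ _ hb, muAux_cons_ne _ _ _ _ hb]
        have h := MuRel_prepend (List.replicate (c % k) (0 : ZMod q) ++ [b]) (ih 0)
        simpa [List.append_assoc] using h

lemma muAux_insert_zero_block {k : ℕ} (v : List (ZMod q)) :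
    ∀ (u : List (ZMod q)) (c : ℕ),
      muAux k c (u ++ List.replicate k 0 ++ v) = muAux k c (u ++ v) := by
  intro u
  induction u with
  | nil =>
      intro c
      simp only [List.nil_append]
      rw [muAux_replicate_append, muAux_add_k]
  | cons b t ih =>
      intro c
      by_cases hb : b = 0
      · subst hb
        simp only [List.cons_append]
        rw [muAux_cons_zero, muAux_cons_zero, ih]
      · simp only [List.cons_append]
        rw [muAux_cons_ne _ _ _ _ hb, muAux_cons_ne _ _ _ _ hb, ih]

lemma length_barPhi (k : ℕ) (x : List (ZMod q)) : (barPhi k x).length = x.length - k := by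
  simp [barPhi]

lemma getD_barPhi (k : ℕ) (x : List (ZMod q)) {r : ℕ} (hr : r < x.length - k) :
    (barPhi k x).getD r 0 = x.getD (r + k) 0 - x.getD r 0 := by
  rw [barPhi, List.getD_eq_getElem?_getD, List.getElem?_map, List.getElem?_range hr]
  rfl

lemma getD_take' (l : List (ZMod q)) {i j : ℕ} (h : j < i) :
    (l.take i).getD j 0 = l.getD j 0 := by
  rw [List.getD_eq_getElem?_getD, List.getElem?_take, if_pos h, List.getD_eq_getElem?_getD]

lemma getD_drop' (l : List (ZMod q)) (i j : ℕ) :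
    (l.drop i).getD j 0 = l.getD (i + j) 0 := by
  rw [List.getD_eq_getElem?_getD, List.getElem?_drop, List.getD_eq_getElem?_getD]

lemma getD_block {k t : ℕ} (s : ℕ) (a : ZMod q) (ht : t < k) :
    (List.replicate t (0 : ZMod q) ++ a :: List.replicate (k - 1 - t) 0).getD s 0 =
      if s = t then a else 0 := by
  rcases Nat.lt_trichotomy s t with h | h | h
  · rw [if_neg (by omega), List.getD_append _ _ _ _ (by simpa using h)]
    exact getD_replicate_zero _ _
  · subst h
    rw [if_pos rfl, List.getD_append_right _ _ _ _ (by simp), List.length_replicate,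
      Nat.sub_self]
    rfl
  · rw [if_neg (by omega), List.getD_append_right _ _ _ _ (by simp; omega),
      List.length_replicate, show s - t = (s - t - 1) + 1 by omega, List.getD_cons_succ]
    exact getD_replicate_zero _ _

/-- getD of a three-part splice `z.take i ++ mid ++ z.drop i` where `mid` has length `k`. -/
lemma getD_splice {i k : ℕ} (z mid : List (ZMod q)) (hi : i ≤ z.length)
    (hmid : mid.length = k) (r : ℕ) :
    (z.take i ++ mid ++ z.drop i).getD r 0 =
      if r < i then z.getD r 0 else if r < i + k then mid.getD (r - i) 0
        else z.getD (r - k) 0 := by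
  have hti : (z.take i).length = i := by simp; omega
  rw [List.append_assoc, List.getD_eq_getElem?_getD, List.getElem?_append, hti]
  by_cases hr1 : r < i
  · rw [if_pos hr1, if_pos hr1, List.getElem?_take, if_pos hr1, List.getD_eq_getElem?_getD]
  · rw [if_neg hr1, if_neg hr1, List.getElem?_append, hmid]
    by_cases hr2 : r < i + k
    · rw [if_pos (by omega), if_pos (by omega), List.getD_eq_getElem?_getD]
    · rw [if_neg (by omega), if_neg (by omega), List.getElem?_drop,
        show i + (r - i - k) = r - k by omega, List.getD_eq_getElem?_getD]

lemma length_dup {i k : ℕ} {y : List (ZMod q)} (hik : i + k ≤ y.length) :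
    (dup i k y).length = y.length + k := by
  rw [dup, if_pos hik]
  simp
  omega

lemma getD_dup {i k r : ℕ} {y : List (ZMod q)} (hik : i + k ≤ y.length) :
    (dup i k y).getD r 0 = if r < i + k then y.getD r 0 else y.getD (r - k) 0 := by
  have h1 : (y.take i).length = i := by simp; omega
  have h2 : ((y.drop i).take k).length = k := by simp; omega
  rw [dup, if_pos hik, List.append_assoc, List.getD_eq_getElem?_getD, List.getElem?_append, h1]
  by_cases hr1 : r < i
  · rw [if_pos hr1, List.getElem?_take, if_pos hr1, if_pos (by omega),
      List.getD_eq_getElem?_getD]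
  · rw [if_neg hr1, List.getElem?_append, h2]
    by_cases hr2 : r < i + k
    · rw [if_pos (by omega), List.getElem?_take, if_pos (by omega), List.getElem?_drop,
        show i + (r - i) = r by omega, if_pos hr2, List.getD_eq_getElem?_getD]
    · rw [if_neg (by omega), List.getElem?_drop, show i + (r - i - k) = r - k by omega,
        if_neg hr2, List.getD_eq_getElem?_getD]

lemma getD_set' (l : List (ZMod q)) (n m : ℕ) (v : ZMod q) :
    (l.set n v).getD m 0 = if n = m ∧ n < l.length then v else l.getD m 0 := by
  rw [List.getD_eq_getElem?_getD, List.getElem?_set]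
  by_cases hnm : n = m
  · subst hnm
    by_cases hn : n < l.length
    · simp [hn, List.getD_eq_getElem?_getD]
    · simp [hn, List.getD_eq_getElem?_getD,
        List.getElem?_eq_none (by omega : l.length ≤ n)]
  · simp [hnm, List.getD_eq_getElem?_getD]

lemma barPhi_dup {i k : ℕ} {y : List (ZMod q)} (hik : i + k ≤ y.length) :
    barPhi k (dup i k y) =
      (barPhi k y).take i ++ List.replicate k 0 ++ (barPhi k y).drop i := by
  have hd := length_dup hik
  have hib : i ≤ (barPhi k y).length := by rw [length_barPhi]; omega
  apply List.ext_getElem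
  · simp [length_barPhi, hd]
    omega
  · intro r h1 h2
    have hr : r < y.length := by rw [length_barPhi, hd] at h1; omega
    rw [← List.getD_eq_getElem _ (0 : ZMod q) h1, ← List.getD_eq_getElem _ (0 : ZMod q) h2,
      getD_barPhi _ _ (by rw [hd]; omega), getD_dup hik, getD_dup hik,
      getD_splice _ _ hib (List.length_replicate (n := k)) r]
    by_cases hr1 : r < i
    · rw [if_pos hr1, if_pos (by omega), if_pos (by omega), getD_barPhi _ _ (by omega)]
    · by_cases hr2 : r < i + k
      · rw [if_neg hr1, if_pos hr2, if_neg (by omega), if_pos hr2,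
          show r + k - k = r by omega, sub_self]
        exact (getD_replicate_zero _ _).symm
      · rw [if_neg hr1, if_neg hr2, if_neg (by omega), if_neg hr2,
          show r + k - k = r by omega, getD_barPhi _ _ (by omega),
          show r - k + k = r by omega]

lemma barPhi_noisy {i k t : ℕ} {y : List (ZMod q)} (a : ZMod q) (hik : i + k ≤ y.length)
    (ht : t < k) (hylen : y.length ≤ i + k + t) :
    barPhi k (addAt (dup i k y) (i + k + t) a) =
      (barPhi k y).take i ++ (List.replicate t 0 ++ a :: List.replicate (k - 1 - t) 0) ++
        (barPhi k y).drop i := by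
  have hd := length_dup hik
  have hib : i ≤ (barPhi k y).length := by rw [length_barPhi]; omega
  have hmid : (List.replicate t (0 : ZMod q) ++ a :: List.replicate (k - 1 - t) 0).length = k := by
    simp; omega
  have hkt : i + k + t < (dup i k y).length := by rw [hd]; omega
  apply List.ext_getElem
  · simp [length_barPhi, addAt, hd]
    omega
  · intro r h1 h2
    have hr : r < y.length := by
      rw [length_barPhi, addAt, List.length_set, hd] at h1; omega
    rw [← List.getD_eq_getElem _ (0 : ZMod q) h1, ← List.getD_eq_getElem _ (0 : ZMod q) h2,
      getD_barPhi _ _ (by rw [addAt, List.length_set, hd]; omega),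
      getD_splice _ _ hib hmid r, addAt, getD_set', getD_set',
      if_neg (show ¬(i + k + t = r ∧ i + k + t < (dup i k y).length) from
        fun hcon => absurd hcon.1 (by omega))]
    by_cases hrit : r = i + t
    · rw [if_pos (show i + k + t = r + k ∧ i + k + t < (dup i k y).length from
          ⟨by omega, hkt⟩), getD_dup hik, getD_dup hik,
        if_neg (show ¬(i + k + t < i + k) by omega),
        show i + k + t - k = i + t by omega,
        if_pos (show r < i + k by omega),
        if_neg (show ¬(r < i) by omega),
        if_pos (show r < i + k by omega), getD_block _ a ht,
        if_pos (show r - i = t by omega), hrit]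
      abel
    · rw [if_neg (show ¬(i + k + t = r + k ∧ i + k + t < (dup i k y).length) from
          fun hcon => absurd hcon.1 (by omega)), getD_dup hik, getD_dup hik]
      by_cases hr1 : r < i
      · rw [if_pos (by omega), if_pos (by omega), if_pos hr1, getD_barPhi _ _ (by omega)]
      · by_cases hr2 : r < i + k
        · rw [if_neg (by omega), if_pos hr2, show r + k - k = r by omega, sub_self,
            if_neg hr1, if_pos hr2, getD_block _ a ht, if_neg (by omega)]
        · rw [if_neg (by omega), if_neg hr2, show r + k - k = r by omega,
            if_neg hr1, if_neg hr2, getD_barPhi _ _ (by omega),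
            show r - k + k = r by omega]

lemma mu_barPhi_dup {i k : ℕ} {y : List (ZMod q)} (hik : i + k ≤ y.length) :
    mu k (barPhi k (dup i k y)) = mu k (barPhi k y) := by
  rw [barPhi_dup hik, mu, mu, muAux_insert_zero_block, List.take_append_drop]

lemma mu_exactDesc {k : ℕ} {x x' : List (ZMod q)} (h : ExactDesc k x x') :
    mu k (barPhi k x') = mu k (barPhi k x) := by
  induction h with
  | refl => rfl
  | tail _ hstep ih =>
      obtain ⟨i, hik, rfl⟩ := hstep
      rw [mu_barPhi_dup hik, ih]

end StatementElevenAux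

/-- if the substitution of the unique noisy duplication falls in
the last `k` positions of `x''`, then the `μ`-root either keeps its length and
suffers a substitution of a single `0` by a nonzero symbol, or grows by `k` via
the insertion of a block `0^{j-1} a 0^{k-j}` of Hamming weight one. (The two
cases are mutually exclusive since `k ≥ 1`.) -/
theorem root_change_tail_substitution
    (q k n : ℕ) (hq : 2 ≤ q) (hk : 1 ≤ k) (hn : 2 * k < n)
    (x : List (ZMod q)) (hx : x.length = n) (hirr : IsIrreducible k x)
    (x'' x' : List (ZMod q)) (i p : ℕ) (a : ZMod q)
    (hx' : ExactDesc k x x') (hik : i + k ≤ x'.length) (ha : a ≠ 0)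
    (hp1 : i + k + 1 ≤ p) (hp2 : p ≤ i + 2 * k)
    (hx'' : x'' = addAt (dup i k x') (p - 1) a)
    (htail : x''.length - k < p ∧ p ≤ x''.length) :
    ((mu k (barPhi k x'')).length = (mu k (barPhi k x)).length ∧
      subOne (mu k (barPhi k x)) (mu k (barPhi k x''))) ∨
    ((mu k (barPhi k x'')).length = (mu k (barPhi k x)).length + k ∧
      ∃ pos ≤ (mu k (barPhi k x)).length, ∃ j ∈ Finset.Icc 1 k, ∃ b : ZMod q, b ≠ 0 ∧
        mu k (barPhi k x'') =
          (mu k (barPhi k x)).take pos ++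
            (List.replicate (j - 1) 0 ++ b :: List.replicate (k - j) 0) ++
            (mu k (barPhi k x)).drop pos) := by
  have hk0 : 0 < k := hk
  have hxlen'' : x''.length = x'.length + k := by
    rw [hx'', addAt, List.length_set, length_dup hik]
  set t := p - 1 - (i + k) with htdef
  have hp1' : p - 1 = i + k + t := by omega
  have htk : t < k := by omega
  have hylen : x'.length ≤ i + k + t := by
    have h := htail.1
    omega
  have hb : barPhi k x'' =
      (barPhi k x').take i ++ (List.replicate t 0 ++ a :: List.replicate (k - 1 - t) 0) ++
        (barPhi k x').drop i := by
    rw [hx'', hp1']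
    exact barPhi_noisy a hik htk hylen
  have hmu : mu k (barPhi k x') = mu k (barPhi k x) := mu_exactDesc hx'
  have key : MuRel k (mu k (barPhi k x)) (mu k (barPhi k x'')) := by
    rw [hb, ← hmu]
    conv_lhs => rw [show barPhi k x' = (barPhi k x').take i ++ (barPhi k x').drop i from
      (List.take_append_drop i (barPhi k x')).symm]
    have h := muRel_insert hk0 a ha (t + 1) (by omega) (by omega)
      ((barPhi k x').drop i) ((barPhi k x').take i) 0
    rw [show (t + 1) - 1 = t from rfl, show k - (t + 1) = k - 1 - t by omega] at h
    exact h
  exact key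


end NoisyDup
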